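/- Let R be an Artinian commutative ring of prime characteristic p, and let Q₁ be a power of p such that (√0)^[Q₁] = 0, where √0 is the nilradical. Then for every ideal 𝔟 of R, (𝔟^F)^[Q₁] = 𝔟^[Q₁]. -/

import Mathlib

/-- The `q`-th Frobenius power of a set `S`: the ideal generated by `q`-th powers
of elements of `S`. -/
def frobPow {R : Type*} [CommRing R] (S : Set R) (q : ℕ) : Ideal R :=
  Ideal.span ((· ^ q) '' S)

/-- The Frobenius closure of an ideal `I` in a ring of characteristic `p`. -/
def frobClosure {R : Type*} [CommRing R] (p : ℕ) (I : Ideal R) : Set R :=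
  {r | ∃ n : ℕ, r ^ p ^ n ∈ frobPow (I : Set R) (p ^ n)}

lemma sup_finset_inf_eq_top {R : Type*} [CommRing R] (I : Ideal R) (s : Finset (Ideal R))
    (h : ∀ J ∈ s, I ⊔ J = ⊤) : I ⊔ s.inf id = ⊤ := by
  classical
  induction s using Finset.induction_on with
  | empty => simp
  | @insert a s ha ih =>
    have h1 : IsCoprime I a := Ideal.isCoprime_iff_sup_eq.mpr (h a (Finset.mem_insert_self a s))
    have h2 : IsCoprime I (s.inf id) :=
      Ideal.isCoprime_iff_sup_eq.mpr (ih fun J hJ => h J (Finset.mem_insert_of_mem hJ))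
    have h3 : I ⊔ a * s.inf id = ⊤ := (h1.mul_right h2).sup_eq
    rw [Finset.inf_insert]
    exact eq_top_iff.mpr (h3 ▸ sup_le_sup_left Ideal.mul_le_inf I)

lemma artinian_radical_le {R : Type*} [CommRing R] [IsArtinianRing R] (𝔟 : Ideal R) :
    𝔟.radical ≤ 𝔟 ⊔ nilradical R := by
  classical
  have hT : {m : Ideal R | m.IsMaximal ∧ ¬ 𝔟 ≤ m}.Finite :=
    (IsArtinianRing.setOfPred_isMaximal_finite R).subset fun m hm => hm.1
  have hcop : 𝔟 ⊔ hT.toFinset.inf id = ⊤ := by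
    refine sup_finset_inf_eq_top _ _ fun J hJ => ?_
    rw [Set.Finite.mem_toFinset] at hJ
    exact hJ.1.1.2 _ (lt_of_le_of_ne le_sup_right fun e => hJ.2 (le_sup_left.trans e.ge))
  intro r hr
  have h1 : (1 : R) ∈ 𝔟 ⊔ hT.toFinset.inf id := hcop ▸ Submodule.mem_top
  obtain ⟨b, hb, y, hy, hby⟩ := Submodule.mem_sup.mp h1
  have hr' : r = r * b + r * y := by rw [← mul_add, hby, mul_one]
  rw [hr']
  refine Submodule.add_mem _ (Ideal.mem_sup_left (Ideal.mul_mem_left _ _ hb)) (Ideal.mem_sup_right ?_)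
  rw [nilradical_eq_sInf]
  refine Submodule.mem_sInf.mpr fun P hP => ?_
  by_cases hbP : 𝔟 ≤ P
  · exact Ideal.mul_mem_right _ _ ((hP.radical_le_iff.mpr hbP) hr)
  · have : P ∈ hT.toFinset := by
      rw [Set.Finite.mem_toFinset]
      exact ⟨(IsArtinianRing.isPrime_iff_isMaximal P).mp hP, hbP⟩
    exact Ideal.mul_mem_left _ _ ((Finset.inf_le this : _ ≤ id P) hy)

theorem artinian_uniform_frobenius_closure {R : Type*} [CommRing R] [IsArtinianRing R]
    (p : ℕ) (hp : p.Prime) [CharP R p] (e₁ : ℕ)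
    (h : frobPow (nilradical R : Set R) (p ^ e₁) = ⊥) (𝔟 : Ideal R) :
    frobPow (frobClosure p 𝔟) (p ^ e₁) = frobPow (𝔟 : Set R) (p ^ e₁) := by
  haveI := Fact.mk hp
  apply le_antisymm
  · rw [frobPow, Ideal.span_le]
    rintro _ ⟨r, ⟨n, hn⟩, rfl⟩
    show r ^ p ^ e₁ ∈ _
    -- r ^ p ^ n ∈ frobPow 𝔟 (p ^ n), hence r ∈ radical 𝔟
    have hfle : frobPow (𝔟 : Set R) (p ^ n) ≤ 𝔟 := by
      rw [frobPow, Ideal.span_le]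
      rintro _ ⟨b, hb, rfl⟩
      exact Ideal.pow_mem_of_mem _ hb _ (pow_pos hp.pos n)
    have hrad : r ∈ 𝔟.radical := ⟨p ^ n, hfle hn⟩
    obtain ⟨b, hb, z, hz, hbz⟩ := Submodule.mem_sup.mp (artinian_radical_le 𝔟 hrad)
    have hpow : r ^ p ^ e₁ = b ^ p ^ e₁ + z ^ p ^ e₁ := by
      rw [← hbz, add_pow_char_pow]
    have hzz : z ^ p ^ e₁ = 0 := by
      have : z ^ p ^ e₁ ∈ frobPow (nilradical R : Set R) (p ^ e₁) :=
        Ideal.subset_span ⟨z, hz, rfl⟩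
      rwa [h, Ideal.mem_bot] at this
    rw [hpow, hzz, add_zero]
    exact Ideal.subset_span ⟨b, hb, rfl⟩
  · refine Ideal.span_mono (Set.image_mono fun r hr => ?_)
    simp only [frobClosure, Set.mem_setOf_eq]
    refine ⟨0, ?_⟩
    simp only [pow_zero, pow_one, frobPow]
    exact Ideal.subset_span ⟨r, hr, rfl⟩
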